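/- Let a > 0 and t > 0, and let u : [0,t] → ℝ be continuously differentiable. Then for every γ > 0: ∂/∂γ [ ∫_0^t u(t−s)·(√a·γ/(2√π·s^{3/2}))·e^{−aγ²/(4s)} ds ] = −(√a/√π)·( u(0)·e^{−aγ²/(4t)}/√t + ∫_0^t u'(t−s)·e^{−aγ²/(4s)}/√s ds ). -/

import Mathlib

open Real MeasureTheory intervalIntegral

section BKCaux

open Set Filter

private lemma aux_pow_div_le_exp (y : ℝ) (hy : 0 ≤ y) (n : ℕ) : (y / n) ^ n ≤ Real.exp y := by
  rcases Nat.eq_zero_or_pos n with h | h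
  · simpa [h] using Real.one_le_exp hy
  · have hn : (0:ℝ) < n := by exact_mod_cast h
    calc (y / n) ^ n ≤ (y / n + 1) ^ n := by
          apply pow_le_pow_left₀ (by positivity); linarith
      _ ≤ (Real.exp (y / n)) ^ n := by
          apply pow_le_pow_left₀ (by positivity) (by linarith [Real.add_one_le_exp (y/n)])
      _ = Real.exp y := by
          rw [← Real.exp_nat_mul]; congr 1; field_simp

private lemma aux_exp_neg_div_le (δ s : ℝ) (hδ : 0 < δ) (hs : 0 < s) (n : ℕ) (hn : 0 < n) :
    Real.exp (-(δ / s)) ≤ (n * s / δ) ^ n := by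
  have hn' : (0:ℝ) < n := by exact_mod_cast hn
  have h1 : ((δ / s) / n) ^ n ≤ Real.exp (δ / s) := aux_pow_div_le_exp _ (by positivity) n
  have h2 : (0:ℝ) < ((δ / s) / n) ^ n := by positivity
  calc Real.exp (-(δ / s)) = (Real.exp (δ / s))⁻¹ := Real.exp_neg _
    _ ≤ (((δ / s) / n) ^ n)⁻¹ := by
        apply inv_anti₀ h2 h1
    _ = (n * s / δ) ^ n := by
        rw [← inv_pow]; congr 1; field_simp

private lemma aux_rpow32 (s : ℝ) (hs : 0 < s) : s ^ ((3:ℝ)/2) = s * Real.sqrt s := by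
  rw [show (3:ℝ)/2 = 1 + 1/2 by norm_num, Real.rpow_add hs, Real.rpow_one, Real.sqrt_eq_rpow]

private lemma aux_bound32 (t δ s : ℝ) (hδ : 0 < δ) (hs : 0 < s) (hst : s ≤ t) :
    Real.exp (-(δ / s)) / (s * Real.sqrt s) ≤ 4 * Real.sqrt t / δ ^ 2 := by
  have h := aux_exp_neg_div_le δ s hδ hs 2 (by norm_num)
  have hr : Real.sqrt s * Real.sqrt s = s := Real.mul_self_sqrt hs.le
  have hrpos : 0 < Real.sqrt s := Real.sqrt_pos.2 hs
  calc Real.exp (-(δ / s)) / (s * Real.sqrt s) ≤ ((2:ℕ) * s / δ) ^ 2 / (s * Real.sqrt s) := by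
        gcongr
    _ = 4 * Real.sqrt s / δ ^ 2 := by
        field_simp
        linear_combination (-4) * hr
    _ ≤ 4 * Real.sqrt t / δ ^ 2 := by gcongr

private lemma aux_bound52 (t δ s : ℝ) (hδ : 0 < δ) (hs : 0 < s) (hst : s ≤ t) :
    Real.exp (-(δ / s)) / (s * Real.sqrt s * s) ≤ 27 * Real.sqrt t / δ ^ 3 := by
  have h := aux_exp_neg_div_le δ s hδ hs 3 (by norm_num)
  have hr : Real.sqrt s * Real.sqrt s = s := Real.mul_self_sqrt hs.le
  have hrpos : 0 < Real.sqrt s := Real.sqrt_pos.2 hs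
  calc Real.exp (-(δ / s)) / (s * Real.sqrt s * s)
      ≤ ((3:ℕ) * s / δ) ^ 3 / (s * Real.sqrt s * s) := by gcongr
    _ = 27 * Real.sqrt s / δ ^ 3 := by
        field_simp
        linear_combination (-27) * hr
    _ ≤ 27 * Real.sqrt t / δ ^ 3 := by gcongr

private lemma aux_bound12 (t δ s : ℝ) (hδ : 0 < δ) (hs : 0 < s) (hst : s ≤ t) :
    Real.exp (-(δ / s)) / Real.sqrt s ≤ Real.sqrt t / δ := by
  have h := aux_exp_neg_div_le δ s hδ hs 1 (by norm_num)
  have hr : Real.sqrt s * Real.sqrt s = s := Real.mul_self_sqrt hs.le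
  have hrpos : 0 < Real.sqrt s := Real.sqrt_pos.2 hs
  calc Real.exp (-(δ / s)) / Real.sqrt s ≤ ((1:ℕ) * s / δ) ^ 1 / Real.sqrt s := by gcongr
    _ = Real.sqrt s / δ := by
        field_simp
        linear_combination (-1) * hr
    _ ≤ Real.sqrt t / δ := by gcongr

private lemma aux_hasDerivAt_kernel (a s : ℝ) (hs : 0 < s) (x : ℝ) :
    HasDerivAt (fun y : ℝ => Real.sqrt a * y / (2 * Real.sqrt Real.pi * s ^ ((3:ℝ)/2)) *
        Real.exp (-(a * y ^ 2 / (4 * s))))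
      (Real.sqrt a / (2 * Real.sqrt Real.pi * s ^ ((3:ℝ)/2)) *
        Real.exp (-(a * x ^ 2 / (4 * s))) * (1 - a * x ^ 2 / (2 * s))) x := by
  have hπ : (0:ℝ) < Real.sqrt Real.pi := Real.sqrt_pos.2 Real.pi_pos
  have hs32 : (0:ℝ) < s ^ ((3:ℝ)/2) := Real.rpow_pos_of_pos hs _
  have hD : (2 * Real.sqrt Real.pi * s ^ ((3:ℝ)/2)) ≠ 0 := by positivity
  have h1 : HasDerivAt (fun y : ℝ => Real.sqrt a * y / (2 * Real.sqrt Real.pi * s ^ ((3:ℝ)/2)))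
      (Real.sqrt a / (2 * Real.sqrt Real.pi * s ^ ((3:ℝ)/2))) x := by
    simpa using (((hasDerivAt_id x).const_mul (Real.sqrt a)).div_const
      (2 * Real.sqrt Real.pi * s ^ ((3:ℝ)/2)))
  have h2inner : HasDerivAt (fun y : ℝ => -(a * y ^ 2 / (4 * s)))
      (-(a * (2 * x) / (4 * s))) x := by
    have := (((hasDerivAt_pow 2 x).const_mul a).div_const (4 * s)).neg
    exact this.congr_deriv (by ring)
  have h := h1.mul h2inner.exp
  refine h.congr_deriv ?_
  field_simp
  ring

private lemma aux_hasDerivAt_g (c s : ℝ) (hs : 0 < s) :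
    HasDerivAt (fun s' : ℝ => Real.exp (-(c / (4 * s'))) / Real.sqrt s')
      (Real.exp (-(c / (4 * s))) * (c / (4 * s ^ 2)) / Real.sqrt s
        - Real.exp (-(c / (4 * s))) / (2 * s * Real.sqrt s)) s := by
  have hrpos : 0 < Real.sqrt s := Real.sqrt_pos.2 hs
  have hr : Real.sqrt s * Real.sqrt s = s := Real.mul_self_sqrt hs.le
  have h4s : (4 * s : ℝ) ≠ 0 := by positivity
  have hinner : HasDerivAt (fun s' : ℝ => -(c / (4 * s'))) (c * 4 / (4 * s) ^ 2) s := by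
    have := ((hasDerivAt_const s c).div ((hasDerivAt_id s).const_mul 4) h4s).neg
    refine this.congr_deriv ?_
    simp only [id]
    field_simp
    ring
  have h := hinner.exp.div (Real.hasDerivAt_sqrt hs.ne') hrpos.ne'
  refine h.congr_deriv ?_
  rw [Real.sq_sqrt hs.le]
  field_simp
  linear_combination (2 * c) * hr

private lemma aux_intervalIntegrable_of_bound {f : ℝ → ℝ} {t C : ℝ} (ht : 0 < t)
    (hmeas : ContinuousOn f (Set.Ioc 0 t)) (hb : ∀ s ∈ Set.Ioc (0:ℝ) t, ‖f s‖ ≤ C) :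
    IntervalIntegrable f volume 0 t := by
  rw [intervalIntegrable_iff, Set.uIoc_of_le ht.le]
  refine Integrable.mono' (g := fun _ => C) ?_ ?_ ?_
  · exact integrableOn_const measure_Ioc_lt_top.ne
  · exact hmeas.aestronglyMeasurable measurableSet_Ioc
  · exact (ae_restrict_iff' measurableSet_Ioc).2 (ae_of_all _ hb)

private lemma aux_tendsto_integral (f : ℝ → ℝ) {t : ℝ} (ht : 0 < t)
    (hint : IntervalIntegrable f volume 0 t) {C : ℝ}
    (hb : ∀ s ∈ Set.Ioc (0:ℝ) t, ‖f s‖ ≤ C) :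
    Tendsto (fun ε => ∫ s in ε..t, f s) (nhdsWithin 0 (Set.Ioi 0))
      (nhds (∫ s in (0:ℝ)..t, f s)) := by
  have hmem : Set.Ioo (0:ℝ) t ∈ nhdsWithin (0:ℝ) (Set.Ioi 0) :=
    Ioo_mem_nhdsGT_of_mem ⟨le_rfl, ht⟩
  have hbnd : ∀ᶠ ε in nhdsWithin (0:ℝ) (Set.Ioi 0),
      ‖∫ s in (0:ℝ)..ε, f s‖ ≤ C * |ε| := by
    filter_upwards [hmem] with ε hε
    have h := intervalIntegral.norm_integral_le_of_norm_le_const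
      (f := f) (a := (0:ℝ)) (b := ε) (C := C) ?_
    · simpa using h
    · intro x hx
      rw [Set.uIoc_of_le hε.1.le] at hx
      exact hb x ⟨hx.1, hx.2.trans hε.2.le⟩
  have hg : Tendsto (fun ε : ℝ => C * |ε|) (nhdsWithin 0 (Set.Ioi 0)) (nhds 0) := by
    have : Tendsto (fun ε : ℝ => C * |ε|) (nhds 0) (nhds (C * |(0:ℝ)|)) :=
      (continuous_const.mul continuous_abs).tendsto 0
    simpa using this.mono_left nhdsWithin_le_nhds
  have h0 : Tendsto (fun ε => ∫ s in (0:ℝ)..ε, f s) (nhdsWithin 0 (Set.Ioi 0)) (nhds 0) :=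
    squeeze_zero_norm' hbnd hg
  have heq : (fun ε => (∫ s in (0:ℝ)..t, f s) - ∫ s in (0:ℝ)..ε, f s)
      =ᶠ[nhdsWithin (0:ℝ) (Set.Ioi 0)] fun ε => ∫ s in ε..t, f s := by
    filter_upwards [hmem] with ε hε
    have hsub1 : Set.uIcc (0:ℝ) ε ⊆ Set.uIcc (0:ℝ) t := by
      rw [Set.uIcc_of_le hε.1.le, Set.uIcc_of_le ht.le]
      exact Set.Icc_subset_Icc le_rfl hε.2.le
    have hsub2 : Set.uIcc ε t ⊆ Set.uIcc (0:ℝ) t := by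
      rw [Set.uIcc_of_le hε.2.le, Set.uIcc_of_le ht.le]
      exact Set.Icc_subset_Icc hε.1.le le_rfl
    have := intervalIntegral.integral_add_adjacent_intervals
      (hint.mono_set hsub1) (hint.mono_set hsub2)
    linarith
  have hT : Tendsto (fun ε => (∫ s in (0:ℝ)..t, f s) - ∫ s in (0:ℝ)..ε, f s)
      (nhdsWithin 0 (Set.Ioi 0)) (nhds ((∫ s in (0:ℝ)..t, f s) - 0)) :=
    tendsto_const_nhds.sub h0
  rw [sub_zero] at hT
  exact Tendsto.congr' heq hT

private lemma aux_exple (a γ x s : ℝ) (ha : 0 < a) (hγ : 0 < γ) (hx : γ/2 ≤ |x|) (hs : 0 < s) :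
    Real.exp (-(a * x ^ 2 / (4 * s))) ≤ Real.exp (-((a * γ ^ 2 / 16) / s)) := by
  apply Real.exp_le_exp.2
  rw [neg_le_neg_iff]
  have hx2 : γ ^ 2 / 4 ≤ x ^ 2 := by nlinarith [sq_abs x, abs_nonneg x]
  rw [div_le_div_iff₀ hs (by positivity : (0:ℝ) < 4 * s)]
  nlinarith [mul_le_mul_of_nonneg_left hx2 (by positivity : (0:ℝ) ≤ a * s)]

private lemma aux_Fd_bound (a t γ M : ℝ) (u : ℝ → ℝ) (ha : 0 < a) (ht : 0 < t) (hγ : 0 < γ)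
    (hM : ∀ x ∈ Set.Icc (0:ℝ) t, ‖u x‖ ≤ M) :
    ∃ C : ℝ, ∀ s ∈ Set.Ioc (0:ℝ) t, ∀ x ∈ Metric.ball γ (γ/2),
      ‖u (t - s) * (Real.sqrt a / (2 * Real.sqrt Real.pi * s ^ ((3:ℝ)/2)) *
        Real.exp (-(a * x ^ 2 / (4 * s))) * (1 - a * x ^ 2 / (2 * s)))‖ ≤ C := by
  have hπ : (0:ℝ) < Real.sqrt Real.pi := Real.sqrt_pos.2 Real.pi_pos
  set δ : ℝ := a * γ ^ 2 / 16 with hδdef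
  have hδ : 0 < δ := by positivity
  have hM0 : 0 ≤ M := (norm_nonneg _).trans (hM 0 ⟨le_rfl, ht.le⟩)
  refine ⟨M * (Real.sqrt a / (2 * Real.sqrt Real.pi)) *
    (4 * Real.sqrt t / δ ^ 2 + 9 * a * γ ^ 2 / 8 * (27 * Real.sqrt t / δ ^ 3)), ?_⟩
  intro s hs x hx
  have hs0 : 0 < s := hs.1
  have hst : s ≤ t := hs.2
  have hrpos : 0 < Real.sqrt s := Real.sqrt_pos.2 hs0
  rw [Metric.mem_ball, Real.dist_eq, abs_sub_lt_iff] at hx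
  have hxlo : γ / 2 < x := by linarith [hx.1, hx.2]
  have hxhi : x < 3 * γ / 2 := by linarith [hx.1, hx.2]
  have hxpos : 0 < x := lt_trans (by positivity) hxlo
  have hxabs : γ / 2 ≤ |x| := by rw [abs_of_pos hxpos]; linarith
  have hE := aux_exple a γ x s ha hγ hxabs hs0
  have hEpos : 0 < Real.exp (-(a * x ^ 2 / (4 * s))) := Real.exp_pos _
  have hB : 0 ≤ a * x ^ 2 / (2 * s) := by positivity
  have habs : |1 - a * x ^ 2 / (2 * s)| ≤ 1 + a * x ^ 2 / (2 * s) :=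
    abs_le.2 ⟨by linarith, by linarith⟩
  have h1 : Real.exp (-(a * x ^ 2 / (4 * s))) / (s * Real.sqrt s) ≤ 4 * Real.sqrt t / δ ^ 2 :=
    le_trans (by gcongr) (aux_bound32 t δ s hδ hs0 hst)
  have h2 : Real.exp (-(a * x ^ 2 / (4 * s))) / (s * Real.sqrt s * s)
      ≤ 27 * Real.sqrt t / δ ^ 3 :=
    le_trans (by gcongr) (aux_bound52 t δ s hδ hs0 hst)
  have hx2hi : x ^ 2 ≤ 9 * γ ^ 2 / 4 := by nlinarith
  have h3 : a * x ^ 2 / 2 ≤ 9 * a * γ ^ 2 / 8 := by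
    nlinarith [mul_le_mul_of_nonneg_left hx2hi ha.le]
  calc ‖u (t - s) * (Real.sqrt a / (2 * Real.sqrt Real.pi * s ^ ((3:ℝ)/2)) *
        Real.exp (-(a * x ^ 2 / (4 * s))) * (1 - a * x ^ 2 / (2 * s)))‖
      = |u (t - s)| * (Real.sqrt a / (2 * Real.sqrt Real.pi * (s * Real.sqrt s)) *
          Real.exp (-(a * x ^ 2 / (4 * s))) * |1 - a * x ^ 2 / (2 * s)|) := by
        simp only [Real.norm_eq_abs, aux_rpow32 s hs0, abs_mul]
        rw [abs_of_nonneg (by positivity : (0:ℝ) ≤ Real.sqrt a /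
          (2 * Real.sqrt Real.pi * (s * Real.sqrt s))), abs_of_pos hEpos]
    _ ≤ M * (Real.sqrt a / (2 * Real.sqrt Real.pi * (s * Real.sqrt s)) *
          Real.exp (-(a * x ^ 2 / (4 * s))) * (1 + a * x ^ 2 / (2 * s))) := by
        gcongr
        exact hM _ ⟨by linarith, by linarith⟩
    _ = M * (Real.sqrt a / (2 * Real.sqrt Real.pi)) *
          (Real.exp (-(a * x ^ 2 / (4 * s))) / (s * Real.sqrt s)
            + a * x ^ 2 / 2 * (Real.exp (-(a * x ^ 2 / (4 * s))) / (s * Real.sqrt s * s))) := by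
        field_simp
    _ ≤ M * (Real.sqrt a / (2 * Real.sqrt Real.pi)) *
          (4 * Real.sqrt t / δ ^ 2 + 9 * a * γ ^ 2 / 8 * (27 * Real.sqrt t / δ ^ 3)) := by
        gcongr

private lemma aux_Fi_bound (a t γ M : ℝ) (u : ℝ → ℝ) (ha : 0 < a) (ht : 0 < t) (hγ : 0 < γ)
    (hM : ∀ x ∈ Set.Icc (0:ℝ) t, ‖u x‖ ≤ M) :
    ∃ C : ℝ, ∀ s ∈ Set.Ioc (0:ℝ) t,
      ‖u (t - s) * (Real.sqrt a * γ / (2 * Real.sqrt Real.pi * s ^ ((3:ℝ)/2)) *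
        Real.exp (-(a * γ ^ 2 / (4 * s))))‖ ≤ C := by
  have hπ : (0:ℝ) < Real.sqrt Real.pi := Real.sqrt_pos.2 Real.pi_pos
  set δ : ℝ := a * γ ^ 2 / 16 with hδdef
  have hδ : 0 < δ := by positivity
  have hM0 : 0 ≤ M := (norm_nonneg _).trans (hM 0 ⟨le_rfl, ht.le⟩)
  refine ⟨M * (Real.sqrt a * γ / (2 * Real.sqrt Real.pi)) * (4 * Real.sqrt t / δ ^ 2), ?_⟩
  intro s hs
  have hs0 : 0 < s := hs.1
  have hrpos : 0 < Real.sqrt s := Real.sqrt_pos.2 hs0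
  have hE := aux_exple a γ γ s ha hγ (by rw [abs_of_pos hγ]; linarith) hs0
  have hEpos : 0 < Real.exp (-(a * γ ^ 2 / (4 * s))) := Real.exp_pos _
  have h1 : Real.exp (-(a * γ ^ 2 / (4 * s))) / (s * Real.sqrt s) ≤ 4 * Real.sqrt t / δ ^ 2 :=
    le_trans (by gcongr) (aux_bound32 t δ s hδ hs0 hs.2)
  calc ‖u (t - s) * (Real.sqrt a * γ / (2 * Real.sqrt Real.pi * s ^ ((3:ℝ)/2)) *
        Real.exp (-(a * γ ^ 2 / (4 * s))))‖
      = |u (t - s)| * (Real.sqrt a * γ / (2 * Real.sqrt Real.pi) *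
          (Real.exp (-(a * γ ^ 2 / (4 * s))) / (s * Real.sqrt s))) := by
        simp only [Real.norm_eq_abs, aux_rpow32 s hs0, abs_mul]
        rw [abs_of_nonneg (by positivity : (0:ℝ) ≤ Real.sqrt a * γ /
          (2 * Real.sqrt Real.pi * (s * Real.sqrt s))), abs_of_pos hEpos]
        field_simp
    _ ≤ M * (Real.sqrt a * γ / (2 * Real.sqrt Real.pi) * (4 * Real.sqrt t / δ ^ 2)) := by
        gcongr
        · exact hM _ ⟨by linarith [hs.2], by linarith [hs0]⟩
    _ = M * (Real.sqrt a * γ / (2 * Real.sqrt Real.pi)) * (4 * Real.sqrt t / δ ^ 2) := by ring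

private lemma aux_psi_bound (a t γ M' : ℝ) (u' : ℝ → ℝ) (ha : 0 < a) (ht : 0 < t) (hγ : 0 < γ)
    (hM' : ∀ x ∈ Set.Icc (0:ℝ) t, ‖u' x‖ ≤ M') :
    ∃ C : ℝ, ∀ s ∈ Set.Ioc (0:ℝ) t,
      ‖u' (t - s) * Real.exp (-(a * γ ^ 2 / (4 * s))) / Real.sqrt s‖ ≤ C := by
  set δ : ℝ := a * γ ^ 2 / 16 with hδdef
  have hδ : 0 < δ := by positivity
  have hM'0 : 0 ≤ M' := (norm_nonneg _).trans (hM' 0 ⟨le_rfl, ht.le⟩)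
  refine ⟨M' * (Real.sqrt t / δ), ?_⟩
  intro s hs
  have hs0 : 0 < s := hs.1
  have hrpos : 0 < Real.sqrt s := Real.sqrt_pos.2 hs0
  have hE := aux_exple a γ γ s ha hγ (by rw [abs_of_pos hγ]; linarith) hs0
  have hEpos : 0 < Real.exp (-(a * γ ^ 2 / (4 * s))) := Real.exp_pos _
  have h1 : Real.exp (-(a * γ ^ 2 / (4 * s))) / Real.sqrt s ≤ Real.sqrt t / δ :=
    le_trans (by gcongr) (aux_bound12 t δ s hδ hs0 hs.2)
  calc ‖u' (t - s) * Real.exp (-(a * γ ^ 2 / (4 * s))) / Real.sqrt s‖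
      = |u' (t - s)| * (Real.exp (-(a * γ ^ 2 / (4 * s))) / Real.sqrt s) := by
        simp only [Real.norm_eq_abs, abs_div, abs_mul, abs_of_pos hEpos, abs_of_pos hrpos]
        ring
    _ ≤ M' * (Real.sqrt t / δ) := by
        gcongr
        exact hM' _ ⟨by linarith [hs.2], by linarith [hs0]⟩

private lemma aux_G_deriv (a t γ : ℝ) (ht : 0 < t)
    (u : ℝ → ℝ) (hu : ContDiffOn ℝ 1 u (Set.Icc 0 t)) (s : ℝ) (hs : s ∈ Set.Ioo (0:ℝ) t) :
    HasDerivAt (fun s' => -(Real.sqrt a / Real.sqrt Real.pi) *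
        (u (t - s') * (Real.exp (-(a * γ ^ 2 / (4 * s'))) / Real.sqrt s')))
      (u (t - s) * (Real.sqrt a / (2 * Real.sqrt Real.pi * s ^ ((3:ℝ)/2)) *
          Real.exp (-(a * γ ^ 2 / (4 * s))) * (1 - a * γ ^ 2 / (2 * s)))
        + (Real.sqrt a / Real.sqrt Real.pi) *
          (derivWithin u (Set.Icc 0 t) (t - s) * Real.exp (-(a * γ ^ 2 / (4 * s)))
            / Real.sqrt s)) s := by
  have hs0 : 0 < s := hs.1
  have hπ : (0:ℝ) < Real.sqrt Real.pi := Real.sqrt_pos.2 Real.pi_pos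
  have hrpos : 0 < Real.sqrt s := Real.sqrt_pos.2 hs0
  have hr : Real.sqrt s * Real.sqrt s = s := Real.mul_self_sqrt hs0.le
  have hmem : t - s ∈ Set.Ioo (0:ℝ) t := ⟨by linarith [hs.2], by linarith [hs.1]⟩
  have hd : HasDerivAt u (derivWithin u (Set.Icc 0 t) (t - s)) (t - s) :=
    ((hu.differentiableOn one_ne_zero (t - s)
      (Set.Ioo_subset_Icc_self hmem)).hasDerivWithinAt).hasDerivAt
      (Icc_mem_nhds hmem.1 hmem.2)
  have hinner : HasDerivAt (fun y : ℝ => t - y) (-1) s := (hasDerivAt_id s).const_sub t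
  have h1 : HasDerivAt (fun s' => u (t - s'))
      (-(derivWithin u (Set.Icc 0 t) (t - s))) s := by
    have := hd.comp s hinner
    exact this.congr_deriv (by ring)
  have h2 := aux_hasDerivAt_g (a * γ ^ 2) s hs0
  have h3 := (h1.mul h2).const_mul (-(Real.sqrt a / Real.sqrt Real.pi))
  refine h3.congr_deriv ?_
  rw [aux_rpow32 s hs0]
  field_simp
  ring

end BKCaux

/-- computational core of Proposition 3.5 of the paper: the
γ-derivative of the boundary-kernel convolution with a C¹ forcing u. -/
theorem boundary_kernel_convolution_deriv
    (a t : ℝ) (ha : 0 < a) (ht : 0 < t)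
    (u : ℝ → ℝ)
    (hu : ContDiffOn ℝ 1 u (Set.Icc 0 t)) :
    ∀ γ : ℝ, 0 < γ →
      deriv (fun γ' => ∫ s in (0 : ℝ)..t,
          u (t - s) * (Real.sqrt a * γ' / (2 * Real.sqrt Real.pi * s ^ ((3 : ℝ) / 2)) *
            Real.exp (-(a * γ' ^ 2 / (4 * s))))) γ
      = -(Real.sqrt a / Real.sqrt Real.pi) *
          (u 0 * Real.exp (-(a * γ ^ 2 / (4 * t))) / Real.sqrt t
            + ∫ s in (0 : ℝ)..t,
                derivWithin u (Set.Icc 0 t) (t - s) *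
                  Real.exp (-(a * γ ^ 2 / (4 * s))) / Real.sqrt s) := by
  intro γ hγ
  have hπ : (0:ℝ) < Real.sqrt Real.pi := Real.sqrt_pos.2 Real.pi_pos
  have hUD : UniqueDiffOn ℝ (Set.Icc (0:ℝ) t) := uniqueDiffOn_Icc ht
  have hcu : ContinuousOn u (Set.Icc 0 t) := hu.continuousOn
  have hcu' : ContinuousOn (derivWithin u (Set.Icc 0 t)) (Set.Icc 0 t) :=
    hu.continuousOn_derivWithin hUD le_rfl
  obtain ⟨M, hM⟩ := isCompact_Icc.exists_bound_of_continuousOn hcu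
  obtain ⟨M', hM'⟩ := isCompact_Icc.exists_bound_of_continuousOn hcu'
  have hmaps : ∀ s ∈ Set.Ioc (0:ℝ) t, t - s ∈ Set.Icc (0:ℝ) t := by
    rintro s ⟨h1, h2⟩; exact ⟨by linarith, by linarith⟩
  have hIoc : Set.uIoc (0:ℝ) t = Set.Ioc 0 t := Set.uIoc_of_le ht.le
  -- continuity building blocks on (0, t]
  have hcontu : ContinuousOn (fun s => u (t - s)) (Set.Ioc 0 t) :=
    hcu.comp ((continuous_const.sub continuous_id).continuousOn) hmaps
  have hcontu' : ContinuousOn (fun s => derivWithin u (Set.Icc 0 t) (t - s)) (Set.Ioc 0 t) :=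
    hcu'.comp ((continuous_const.sub continuous_id).continuousOn) hmaps
  have hcontexp : ∀ x : ℝ, ContinuousOn (fun s => Real.exp (-(a * x ^ 2 / (4 * s))))
      (Set.Ioc (0:ℝ) t) := by
    intro x
    apply Real.continuous_exp.comp_continuousOn
    apply ContinuousOn.neg
    exact continuousOn_const.div (continuous_const.mul continuous_id).continuousOn
      (fun s hs => by have := hs.1; positivity)
  have hcontrpow : ContinuousOn (fun s : ℝ => s ^ ((3:ℝ)/2)) (Set.Ioc (0:ℝ) t) :=
    fun s hs => (Real.continuousAt_rpow_const s _ (Or.inl hs.1.ne')).continuousWithinAt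
  have hrpowne : ∀ s ∈ Set.Ioc (0:ℝ) t, (2 * Real.sqrt Real.pi * s ^ ((3:ℝ)/2)) ≠ 0 := by
    intro s hs
    have h32 : (0:ℝ) < s ^ ((3:ℝ)/2) := Real.rpow_pos_of_pos hs.1 _
    positivity
  have hsqrtne : ∀ s ∈ Set.Ioc (0:ℝ) t, Real.sqrt s ≠ 0 :=
    fun s hs => (Real.sqrt_pos.2 hs.1).ne'
  have hcontFi : ∀ x : ℝ, ContinuousOn (fun s =>
      u (t - s) * (Real.sqrt a * x / (2 * Real.sqrt Real.pi * s ^ ((3:ℝ)/2)) *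
        Real.exp (-(a * x ^ 2 / (4 * s))))) (Set.Ioc (0:ℝ) t) := by
    intro x
    exact hcontu.mul ((continuousOn_const.div (continuousOn_const.mul hcontrpow)
      hrpowne).mul (hcontexp x))
  have hcontFd : ContinuousOn (fun s =>
      u (t - s) * (Real.sqrt a / (2 * Real.sqrt Real.pi * s ^ ((3:ℝ)/2)) *
        Real.exp (-(a * γ ^ 2 / (4 * s))) * (1 - a * γ ^ 2 / (2 * s))))
      (Set.Ioc (0:ℝ) t) := by
    apply hcontu.mul
    apply ContinuousOn.mul
    · exact (continuousOn_const.div (continuousOn_const.mul hcontrpow) hrpowne).mul (hcontexp γ)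
    · exact continuousOn_const.sub (continuousOn_const.div
        (continuous_const.mul continuous_id).continuousOn
        (fun s hs => by have := hs.1; positivity))
  have hcontψ : ContinuousOn (fun s =>
      derivWithin u (Set.Icc 0 t) (t - s) * Real.exp (-(a * γ ^ 2 / (4 * s))) / Real.sqrt s)
      (Set.Ioc (0:ℝ) t) :=
    (hcontu'.mul (hcontexp γ)).div Real.continuous_sqrt.continuousOn hsqrtne
  have hcontG : ContinuousOn (fun s =>
      -(Real.sqrt a / Real.sqrt Real.pi) *
        (u (t - s) * (Real.exp (-(a * γ ^ 2 / (4 * s))) / Real.sqrt s)))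
      (Set.Ioc (0:ℝ) t) :=
    continuousOn_const.mul (hcontu.mul
      ((hcontexp γ).div Real.continuous_sqrt.continuousOn hsqrtne))
  -- bounds
  obtain ⟨C, hC⟩ := aux_Fd_bound a t γ M u ha ht hγ hM
  obtain ⟨C₁, hC₁⟩ := aux_Fi_bound a t γ M u ha ht hγ hM
  obtain ⟨C₂, hC₂⟩ := aux_psi_bound a t γ M' (derivWithin u (Set.Icc 0 t)) ha ht hγ hM'
  -- differentiation under the integral sign
  have hDom := intervalIntegral.hasDerivAt_integral_of_dominated_loc_of_deriv_le
    (F := fun x s => u (t - s) * (Real.sqrt a * x / (2 * Real.sqrt Real.pi * s ^ ((3:ℝ)/2)) *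
      Real.exp (-(a * x ^ 2 / (4 * s)))))
    (F' := fun x s => u (t - s) * (Real.sqrt a / (2 * Real.sqrt Real.pi * s ^ ((3:ℝ)/2)) *
      Real.exp (-(a * x ^ 2 / (4 * s))) * (1 - a * x ^ 2 / (2 * s))))
    (bound := fun _ => C) (μ := volume) (a := (0:ℝ)) (b := t) (x₀ := γ)
    (Metric.ball_mem_nhds γ (half_pos hγ))
    (Filter.Eventually.of_forall (fun x => by
      rw [hIoc]; exact (hcontFi x).aestronglyMeasurable measurableSet_Ioc))
    (aux_intervalIntegrable_of_bound ht (hcontFi γ) hC₁)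
    (by rw [hIoc]; exact hcontFd.aestronglyMeasurable measurableSet_Ioc)
    (MeasureTheory.ae_of_all _ (fun s hsI x hx => hC s (hIoc ▸ hsI) x hx))
    intervalIntegrable_const
    (MeasureTheory.ae_of_all _ (fun s hsI x hx =>
      (aux_hasDerivAt_kernel a s (hIoc ▸ hsI : s ∈ Set.Ioc (0:ℝ) t).1 x).const_mul (u (t - s))))
  obtain ⟨hFdint, hDeriv⟩ := hDom
  -- integrability of ψ
  have hψint : IntervalIntegrable (fun s =>
      derivWithin u (Set.Icc 0 t) (t - s) * Real.exp (-(a * γ ^ 2 / (4 * s))) / Real.sqrt s)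
      volume 0 t := aux_intervalIntegrable_of_bound ht hcontψ hC₂
  -- FTC on [ε, t] and limits
  have hsubIoc : ∀ ε ∈ Set.Ioo (0:ℝ) t, Set.Icc ε t ⊆ Set.Ioc (0:ℝ) t :=
    fun ε hε x hx => ⟨lt_of_lt_of_le hε.1 hx.1, hx.2⟩
  have hsub2 : ∀ ε ∈ Set.Ioo (0:ℝ) t, Set.uIcc ε t ⊆ Set.uIcc (0:ℝ) t := by
    intro ε hε
    rw [Set.uIcc_of_le hε.2.le, Set.uIcc_of_le ht.le]
    exact Set.Icc_subset_Icc hε.1.le le_rfl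
  have hsplit : ∀ ε ∈ Set.Ioo (0:ℝ) t,
      (∫ s in ε..t, u (t - s) * (Real.sqrt a / (2 * Real.sqrt Real.pi * s ^ ((3:ℝ)/2)) *
        Real.exp (-(a * γ ^ 2 / (4 * s))) * (1 - a * γ ^ 2 / (2 * s))))
      = (-(Real.sqrt a / Real.sqrt Real.pi) *
          (u (t - t) * (Real.exp (-(a * γ ^ 2 / (4 * t))) / Real.sqrt t)))
        - (-(Real.sqrt a / Real.sqrt Real.pi) *
          (u (t - ε) * (Real.exp (-(a * γ ^ 2 / (4 * ε))) / Real.sqrt ε)))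
        - (Real.sqrt a / Real.sqrt Real.pi) *
          ∫ s in ε..t, derivWithin u (Set.Icc 0 t) (t - s) *
            Real.exp (-(a * γ ^ 2 / (4 * s))) / Real.sqrt s := by
    intro ε hε
    have hFd' : IntervalIntegrable (fun s =>
        u (t - s) * (Real.sqrt a / (2 * Real.sqrt Real.pi * s ^ ((3:ℝ)/2)) *
          Real.exp (-(a * γ ^ 2 / (4 * s))) * (1 - a * γ ^ 2 / (2 * s)))) volume ε t :=
      hFdint.mono_set (hsub2 ε hε)
    have hψ' : IntervalIntegrable (fun s =>
        derivWithin u (Set.Icc 0 t) (t - s) * Real.exp (-(a * γ ^ 2 / (4 * s))) / Real.sqrt s)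
        volume ε t := hψint.mono_set (hsub2 ε hε)
    have hFTC := intervalIntegral.integral_eq_sub_of_hasDeriv_right_of_le hε.2.le
      (f := fun s => -(Real.sqrt a / Real.sqrt Real.pi) *
        (u (t - s) * (Real.exp (-(a * γ ^ 2 / (4 * s))) / Real.sqrt s)))
      (f' := fun s => u (t - s) * (Real.sqrt a / (2 * Real.sqrt Real.pi * s ^ ((3:ℝ)/2)) *
          Real.exp (-(a * γ ^ 2 / (4 * s))) * (1 - a * γ ^ 2 / (2 * s)))
        + (Real.sqrt a / Real.sqrt Real.pi) *
          (derivWithin u (Set.Icc 0 t) (t - s) * Real.exp (-(a * γ ^ 2 / (4 * s)))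
            / Real.sqrt s))
      (hcontG.mono (hsubIoc ε hε))
      (fun x hx => (aux_G_deriv a t γ ht u hu x
        ⟨lt_trans hε.1 hx.1, hx.2⟩).hasDerivWithinAt)
      (hFd'.add (hψ'.const_mul _))
    rw [intervalIntegral.integral_add hFd' (hψ'.const_mul _),
      intervalIntegral.integral_const_mul] at hFTC
    linarith
  -- the three limits
  have LFd := aux_tendsto_integral (fun s =>
      u (t - s) * (Real.sqrt a / (2 * Real.sqrt Real.pi * s ^ ((3:ℝ)/2)) *
        Real.exp (-(a * γ ^ 2 / (4 * s))) * (1 - a * γ ^ 2 / (2 * s)))) ht hFdint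
    (fun s hs => hC s hs γ (Metric.mem_ball_self (half_pos hγ)))
  have Lψ := aux_tendsto_integral (fun s =>
      derivWithin u (Set.Icc 0 t) (t - s) * Real.exp (-(a * γ ^ 2 / (4 * s))) / Real.sqrt s)
    ht hψint hC₂
  have LG : Filter.Tendsto (fun ε => -(Real.sqrt a / Real.sqrt Real.pi) *
      (u (t - ε) * (Real.exp (-(a * γ ^ 2 / (4 * ε))) / Real.sqrt ε)))
      (nhdsWithin 0 (Set.Ioi 0)) (nhds 0) := by
    have hδ : (0:ℝ) < a * γ ^ 2 / 16 := by positivity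
    have hb : ∀ᶠ ε in nhdsWithin (0:ℝ) (Set.Ioi 0),
        ‖-(Real.sqrt a / Real.sqrt Real.pi) *
          (u (t - ε) * (Real.exp (-(a * γ ^ 2 / (4 * ε))) / Real.sqrt ε))‖
        ≤ Real.sqrt a / Real.sqrt Real.pi * M * (Real.sqrt ε / (a * γ ^ 2 / 16)) := by
      filter_upwards [Ioo_mem_nhdsGT_of_mem
        (Set.mem_Ico.2 ⟨le_rfl, ht⟩ : (0:ℝ) ∈ Set.Ico 0 t)] with ε hε
      have hε0 : 0 < ε := hε.1
      have hrpos : 0 < Real.sqrt ε := Real.sqrt_pos.2 hε0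
      have hE := aux_exple a γ γ ε ha hγ (by rw [abs_of_pos hγ]; linarith) hε0
      have hEpos : 0 < Real.exp (-(a * γ ^ 2 / (4 * ε))) := Real.exp_pos _
      have h12 : Real.exp (-(a * γ ^ 2 / (4 * ε))) / Real.sqrt ε
          ≤ Real.sqrt ε / (a * γ ^ 2 / 16) :=
        le_trans (by gcongr) (aux_bound12 ε (a * γ ^ 2 / 16) ε hδ hε0 le_rfl)
      have hMε : |u (t - ε)| ≤ M := hM _ ⟨by linarith [hε.2], by linarith [hε0]⟩
      calc ‖-(Real.sqrt a / Real.sqrt Real.pi) *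
            (u (t - ε) * (Real.exp (-(a * γ ^ 2 / (4 * ε))) / Real.sqrt ε))‖
          = Real.sqrt a / Real.sqrt Real.pi *
            (|u (t - ε)| * (Real.exp (-(a * γ ^ 2 / (4 * ε))) / Real.sqrt ε)) := by
            simp only [Real.norm_eq_abs, abs_mul, abs_neg]
            rw [abs_of_nonneg (by positivity : (0:ℝ) ≤ Real.sqrt a / Real.sqrt Real.pi),
              abs_of_pos (by positivity : (0:ℝ) < Real.exp (-(a * γ ^ 2 / (4 * ε)))
                / Real.sqrt ε)]
        _ ≤ Real.sqrt a / Real.sqrt Real.pi * (M * (Real.sqrt ε / (a * γ ^ 2 / 16))) := by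
            have hM0 : 0 ≤ M := (norm_nonneg _).trans (hM 0 ⟨le_rfl, ht.le⟩)
            gcongr
        _ = Real.sqrt a / Real.sqrt Real.pi * M * (Real.sqrt ε / (a * γ ^ 2 / 16)) := by ring
    apply squeeze_zero_norm' hb
    have hcg : Filter.Tendsto (fun ε : ℝ => Real.sqrt a / Real.sqrt Real.pi * M *
        (Real.sqrt ε / (a * γ ^ 2 / 16))) (nhds 0)
        (nhds (Real.sqrt a / Real.sqrt Real.pi * M * (Real.sqrt 0 / (a * γ ^ 2 / 16)))) :=
      (continuous_const.mul (Real.continuous_sqrt.div_const _)).tendsto 0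
    simpa using hcg.mono_left nhdsWithin_le_nhds
  -- identify the integral of the derivative
  have hkey : Filter.Tendsto (fun ε =>
      ∫ s in ε..t, u (t - s) * (Real.sqrt a / (2 * Real.sqrt Real.pi * s ^ ((3:ℝ)/2)) *
        Real.exp (-(a * γ ^ 2 / (4 * s))) * (1 - a * γ ^ 2 / (2 * s))))
      (nhdsWithin 0 (Set.Ioi 0))
      (nhds ((-(Real.sqrt a / Real.sqrt Real.pi) *
          (u (t - t) * (Real.exp (-(a * γ ^ 2 / (4 * t))) / Real.sqrt t))) - 0
        - (Real.sqrt a / Real.sqrt Real.pi) *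
          ∫ s in (0:ℝ)..t, derivWithin u (Set.Icc 0 t) (t - s) *
            Real.exp (-(a * γ ^ 2 / (4 * s))) / Real.sqrt s)) := by
    apply Filter.Tendsto.congr' _ ((tendsto_const_nhds.sub LG).sub (Lψ.const_mul _))
    filter_upwards [Ioo_mem_nhdsGT_of_mem
      (Set.mem_Ico.2 ⟨le_rfl, ht⟩ : (0:ℝ) ∈ Set.Ico 0 t)] with ε hε
    exact (hsplit ε hε).symm
  have hIdent : (∫ s in (0:ℝ)..t,
      u (t - s) * (Real.sqrt a / (2 * Real.sqrt Real.pi * s ^ ((3:ℝ)/2)) *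
        Real.exp (-(a * γ ^ 2 / (4 * s))) * (1 - a * γ ^ 2 / (2 * s))))
      = (-(Real.sqrt a / Real.sqrt Real.pi) *
          (u (t - t) * (Real.exp (-(a * γ ^ 2 / (4 * t))) / Real.sqrt t)))
        - (Real.sqrt a / Real.sqrt Real.pi) *
          ∫ s in (0:ℝ)..t, derivWithin u (Set.Icc 0 t) (t - s) *
            Real.exp (-(a * γ ^ 2 / (4 * s))) / Real.sqrt s := by
    have := tendsto_nhds_unique LFd hkey
    linarith
  rw [hDeriv.deriv, hIdent, sub_self]
  ring
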